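/- In the graded ring A = 𝔽₂[x, x₁, x₂]/(x² + x·x₁) with |x| = |x₁| = 1, |x₂| = 2, the operation Sq¹ determined by Sq¹(x) = x², Sq¹(x₁) = x₁², Sq¹(x₂) = x₁x₂ and the Cartan formula is a well-defined derivation with Sq¹∘Sq¹ = 0; moreover on a monomial x^i x₁^{i₁} x₂^{i₂} (i ∈ {0,1}) it vanishes when i + i₁ + i₂ is even and equals x^i x₁^{i₁+1} x₂^{i₂} when i + i₁ + i₂ is odd. -/

import Mathlib

open MvPolynomial

set_option synthInstance.maxHeartbeats 800000
set_option maxHeartbeats 1600000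

noncomputable section Sq1Aux

abbrev Rp2 := MvPolynomial (Fin 3) (ZMod 2)

noncomputable def ddSq : Derivation (ZMod 2) Rp2 Rp2 :=
  mkDerivation (ZMod 2) ![X 0 ^ 2, X 1 ^ 2, X 1 * X 2]

lemma ddSq_X0 : ddSq (X 0) = X 0 ^ 2 := mkDerivation_X _ _ 0
lemma ddSq_X1 : ddSq (X 1) = X 1 ^ 2 := mkDerivation_X _ _ 1
lemma ddSq_X2 : ddSq (X 2) = X 1 * X 2 := mkDerivation_X _ _ 2

lemma ddSq_ddSq (p : Rp2) : ddSq (ddSq p) = 0 := by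
  induction p using MvPolynomial.induction_on with
  | C a => simp
  | add p q hp hq => simp [hp, hq]
  | mul_X p i hp =>
      have key : ddSq (ddSq (X i : Rp2)) = 0 := by
        fin_cases i
        · show ddSq (ddSq (X 0 : Rp2)) = 0
          rw [ddSq_X0, Derivation.leibniz_pow, CharTwo.two_nsmul]
        · show ddSq (ddSq (X 1 : Rp2)) = 0
          rw [ddSq_X1, Derivation.leibniz_pow, CharTwo.two_nsmul]
        · show ddSq (ddSq (X 2 : Rp2)) = 0
          rw [ddSq_X2, Derivation.leibniz, ddSq_X1, ddSq_X2, smul_eq_mul, smul_eq_mul]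
          ring_nf
          simp [CharTwo.two_eq_zero]
      simp only [Derivation.leibniz, smul_eq_mul, map_add, hp, key, mul_zero, zero_mul,
        add_zero, zero_add]
      rw [mul_comm (ddSq (X i))]
      exact CharTwo.add_self_eq_zero _

lemma ddSq_g : ddSq ((X 0 : Rp2) ^ 2 + X 0 * X 1) =
    ((X 0 : Rp2) ^ 2 + X 0 * X 1) * X 1 := by
  rw [map_add, Derivation.leibniz_pow, CharTwo.two_nsmul, Derivation.leibniz,
    ddSq_X0, ddSq_X1, smul_eq_mul, smul_eq_mul]
  ring

lemma ddSq_mem {I : Ideal Rp2} (hI : I = Ideal.span {(X 0) ^ 2 + X 0 * X 1})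
    {p : Rp2} (hp : p ∈ I) : ddSq p ∈ I := by
  subst hI
  rw [Ideal.mem_span_singleton] at hp ⊢
  obtain ⟨q, rfl⟩ := hp
  rw [Derivation.leibniz, smul_eq_mul, smul_eq_mul]
  exact dvd_add ⟨ddSq q, rfl⟩ ⟨q * X 1, by rw [ddSq_g]; ring⟩

end Sq1Aux

theorem stmt8
    (I : Ideal (MvPolynomial (Fin 3) (ZMod 2)))
    (hI : I = Ideal.span {(X 0) ^ 2 + X 0 * X 1})
    (x x₁ x₂ : MvPolynomial (Fin 3) (ZMod 2) ⧸ I)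
    (hx : x = Ideal.Quotient.mk I (X 0))
    (hx₁ : x₁ = Ideal.Quotient.mk I (X 1))
    (hx₂ : x₂ = Ideal.Quotient.mk I (X 2)) :
    ∃ D : Derivation (ZMod 2) (MvPolynomial (Fin 3) (ZMod 2) ⧸ I)
        (MvPolynomial (Fin 3) (ZMod 2) ⧸ I),
      D x = x ^ 2 ∧ D x₁ = x₁ ^ 2 ∧ D x₂ = x₁ * x₂ ∧
      (∀ u, D (D u) = 0) ∧
      (∀ i i₁ i₂ : ℕ, i ≤ 1 →
        D (x ^ i * x₁ ^ i₁ * x₂ ^ i₂) =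
          if Even (i + i₁ + i₂) then 0 else x ^ i * x₁ ^ (i₁ + 1) * x₂ ^ i₂) := by
  classical
  have hmem : ∀ p ∈ I.restrictScalars (ZMod 2), p ∈ LinearMap.ker
      ((Ideal.Quotient.mkₐ (ZMod 2) I).toLinearMap.comp ddSq.toLinearMap) := by
    intro p hp
    simp only [LinearMap.mem_ker, LinearMap.comp_apply, Derivation.coeFn_coe,
      AlgHom.toLinearMap_apply, Ideal.Quotient.mkₐ_eq_mk]
    exact (Submodule.Quotient.mk_eq_zero _).2 (ddSq_mem hI hp)
  let L : (Rp2 ⧸ I.restrictScalars (ZMod 2)) →ₗ[ZMod 2] (Rp2 ⧸ I) :=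
    Submodule.liftQ _ _ hmem
  let e := Submodule.Quotient.restrictScalarsEquiv (ZMod 2) I
  let Dlin : (Rp2 ⧸ I) →ₗ[ZMod 2] (Rp2 ⧸ I) := L.comp e.symm.toLinearMap
  have hDmk : ∀ p : Rp2, Dlin (Ideal.Quotient.mk I p) = Ideal.Quotient.mk I (ddSq p) := by
    intro p
    show L (e.symm (Ideal.Quotient.mk I p)) = _
    have : e.symm (Ideal.Quotient.mk I p) = Submodule.Quotient.mk p :=
      Submodule.Quotient.restrictScalarsEquiv_symm_mk _ _ _
    rw [this]
    show ((Ideal.Quotient.mkₐ (ZMod 2) I).toLinearMap.comp ddSq.toLinearMap) p = _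
    simp
  have hsurj := Ideal.Quotient.mk_surjective (I := I)
  have hone : Dlin 1 = 0 := by
    rw [show (1 : Rp2 ⧸ I) = Ideal.Quotient.mk I 1 from rfl, hDmk]
    simp
  have hleib : ∀ a b : Rp2 ⧸ I, Dlin (a * b) = a • Dlin b + b • Dlin a := by
    intro a b
    obtain ⟨p, rfl⟩ := hsurj a
    obtain ⟨q, rfl⟩ := hsurj b
    rw [← map_mul, hDmk, hDmk, hDmk, Derivation.leibniz, map_add, smul_eq_mul, smul_eq_mul,
      map_mul, map_mul, smul_eq_mul, smul_eq_mul]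
  refine ⟨⟨Dlin, hone, hleib⟩, ?_⟩
  set D : Derivation (ZMod 2) (Rp2 ⧸ I) (Rp2 ⧸ I) := ⟨Dlin, hone, hleib⟩ with hD
  have hDapp : ∀ p : Rp2, D (Ideal.Quotient.mk I p) = Ideal.Quotient.mk I (ddSq p) := hDmk
  subst hx hx₁ hx₂
  have hDx : D (Ideal.Quotient.mk I (X 0)) = (Ideal.Quotient.mk I (X 0)) ^ 2 := by
    rw [hDapp, ddSq_X0, map_pow]
  have hDx1 : D (Ideal.Quotient.mk I (X 1)) = (Ideal.Quotient.mk I (X 1)) ^ 2 := by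
    rw [hDapp, ddSq_X1, map_pow]
  have hDx2 : D (Ideal.Quotient.mk I (X 2)) =
      Ideal.Quotient.mk I (X 1) * Ideal.Quotient.mk I (X 2) := by
    rw [hDapp, ddSq_X2, map_mul]
  refine ⟨hDx, hDx1, hDx2, ?_, ?_⟩
  · intro u
    obtain ⟨p, rfl⟩ := hsurj u
    rw [hDapp, hDapp, ddSq_ddSq, map_zero]
  · -- monomial formula
    set xq := Ideal.Quotient.mk I (X 0 : Rp2)
    set x1q := Ideal.Quotient.mk I (X 1 : Rp2)
    set x2q := Ideal.Quotient.mk I (X 2 : Rp2)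
    have h2 : ∀ b : Rp2 ⧸ I, b + b = 0 := by
      intro b
      obtain ⟨p, rfl⟩ := hsurj b
      rw [← map_add, CharTwo.add_self_eq_zero, map_zero]
    have hns : ∀ (n : ℕ) (a : Rp2 ⧸ I), n • a = if Even n then 0 else a := by
      intro n a
      induction n with
      | zero => simp
      | succ n ih =>
          rw [succ_nsmul, ih]
          by_cases hn : Even n <;> simp [hn, Nat.even_add_one, h2 a]
    have hx2eq : xq ^ 2 = xq * x1q := by
      rw [← map_pow, ← map_mul, Ideal.Quotient.eq, CharTwo.sub_eq_add, hI]
      exact Ideal.subset_span rfl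
    have e1 : ∀ n : ℕ, D (x1q ^ n) = (n : Rp2 ⧸ I) * x1q ^ (n + 1) := by
      intro n
      induction n with
      | zero => simp
      | succ n ih =>
          rw [pow_succ, Derivation.leibniz, ih, hDx1, smul_eq_mul, smul_eq_mul]
          push_cast
          ring
    have e2 : ∀ n : ℕ, D (x2q ^ n) = (n : Rp2 ⧸ I) * (x1q * x2q ^ n) := by
      intro n
      induction n with
      | zero => simp
      | succ n ih =>
          rw [pow_succ, Derivation.leibniz, ih, hDx2, smul_eq_mul, smul_eq_mul]
          push_cast
          ring
    intro i i₁ i₂ hi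
    have e0 : D (xq ^ i) = (i : Rp2 ⧸ I) * (xq ^ i * x1q) := by
      interval_cases i
      · simp
      · rw [pow_one, hDx, hx2eq]
        push_cast
        ring
    have main : D (xq ^ i * x1q ^ i₁ * x2q ^ i₂) =
        ((i + i₁ + i₂ : ℕ) : Rp2 ⧸ I) * (xq ^ i * x1q ^ (i₁ + 1) * x2q ^ i₂) := by
      rw [Derivation.leibniz, Derivation.leibniz, e0, e1, e2, smul_eq_mul, smul_eq_mul,
        smul_eq_mul, smul_eq_mul]
      push_cast
      ring
    rw [main, ← nsmul_eq_mul, hns]
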